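/- Let M be a faithful reduced multiplication R-module. Then for each a ∈ R, a minimal prime submodule P of M contains aM if and only if P contains (0 :_M Ann_R(aM)); i.e. V(aM) = V((0 :_M Ann_R(aM))). -/

import Mathlib

variable {R : Type*} [CommRing R] {M : Type*} [AddCommGroup M] [Module R M]

/-- `M` is a multiplication module: every submodule is `IM` for some ideal `I`. -/
def IsMultiplicationModule (R M : Type*) [CommRing R] [AddCommGroup M] [Module R M] : Prop :=
  ∀ N : Submodule R M, ∃ I : Ideal R, N = I • (⊤ : Submodule R M)

/-- A prime submodule. -/
def Submodule.IsPrimeSubmodule (P : Submodule R M) : Prop :=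
  P ≠ ⊤ ∧ ∀ (r : R) (m : M), r • m ∈ P → m ∈ P ∨ r ∈ P.colon ⊤

/-- `M` is reduced: the intersection of all prime submodules is zero. -/
def IsReducedModule (R M : Type*) [CommRing R] [AddCommGroup M] [Module R M] : Prop :=
  sInf {P : Submodule R M | P.IsPrimeSubmodule} = ⊥

/-- A minimal prime submodule of `M`. -/
def Submodule.IsMinimalPrime (P : Submodule R M) : Prop :=
  P.IsPrimeSubmodule ∧ ∀ Q : Submodule R M, Q.IsPrimeSubmodule → Q ≤ P → Q = P

/-- `𝔓_K`: the intersection of all minimal prime submodules containing `K`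
(equal to `M` if there are none). -/
def primeRad (K : Submodule R M) : Submodule R M :=
  sInf {P : Submodule R M | P.IsMinimalPrime ∧ K ≤ P}

/-- `V(K)`: the set of minimal prime submodules containing `K`. -/
def Vset (K : Submodule R M) : Set (Submodule R M) :=
  {P : Submodule R M | P.IsMinimalPrime ∧ K ≤ P}

/-- A quasi `z°`-submodule. -/
def IsQuasiZSubmodule (N : Submodule R M) : Prop :=
  N ≠ ⊤ ∧ ∀ a ∈ N.colon ⊤, primeRad (Ideal.span {a} • (⊤ : Submodule R M)) ≤ N

/-- `𝔓_I` for an ideal: intersection of all minimal prime ideals of `R` containing `I`. -/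
def idealPrimeRad (I : Ideal R) : Ideal R :=
  sInf {p : Ideal R | p ∈ minimalPrimes R ∧ I ≤ p}

/-- A `z°`-ideal of `R`. -/
def IsZIdeal (I : Ideal R) : Prop :=
  I ≠ ⊤ ∧ ∀ a ∈ I, idealPrimeRad (Ideal.span {a}) ≤ I

/-- `(0 :_M J)` for an ideal `J`. -/
def pointAnn (J : Ideal R) : Submodule R M where
  carrier := {m : M | ∀ j ∈ J, j • m = 0}
  zero_mem' := by intro j _; simp
  add_mem' := by
    intro a b ha hb j hj
    rw [smul_add, ha j hj, hb j hj, add_zero]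
  smul_mem' := by
    intro c m hm j hj
    rw [smul_comm, hm j hj, smul_zero]

/-- The colon ideal of a prime submodule is a prime ideal. -/
lemma colonPrime {P : Submodule R M} (h : P.IsPrimeSubmodule) : (P.colon ⊤).IsPrime := by
  constructor
  · intro htop
    apply h.1
    rw [eq_top_iff]
    intro m _
    simpa using Submodule.mem_colon.1 (htop ▸ Submodule.mem_top : (1:R) ∈ P.colon ⊤) m trivial
  · intro r s hrs
    by_cases hr : r ∈ P.colon ⊤
    · exact Or.inl hr
    · right
      rw [Submodule.mem_colon]
      intro m _
      have : r • (s • m) ∈ P := by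
        rw [← mul_smul]
        exact Submodule.mem_colon.1 hrs m trivial
      rcases h.2 r (s • m) this with h1 | h2
      · exact h1
      · exact absurd h2 hr

/-- `R` is reduced when `M` is a faithful reduced module. -/
lemma reducedR (hfaithful : (⊥ : Submodule R M).colon ⊤ = ⊥)
    (hred : IsReducedModule R M) : IsReduced R := by
  constructor
  intro x hx
  obtain ⟨n, hn⟩ := hx
  have hcolon : x ∈ (⊥ : Submodule R M).colon ⊤ := by
    rw [Submodule.mem_colon]
    intro m _
    have : x • m ∈ sInf {P : Submodule R M | P.IsPrimeSubmodule} := by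
      rw [Submodule.mem_sInf]
      intro Q hQ
      have hxQ : x ∈ Q.colon ⊤ := by
        refine (colonPrime hQ).mem_of_pow_mem n ?_
        rw [hn]; exact zero_mem _
      exact Submodule.mem_colon.1 hxQ m trivial
    rwa [hred] at this
  rw [hfaithful] at hcolon
  exact hcolon

/-- There is a minimal prime ideal below `p` avoiding `a`, provided every
annihilator of `a` lies in `p`. -/
lemma existsMinPrimeAvoid (hR : IsReduced R) {p : Ideal R} (hp : p.IsPrime) {a : R}
    (ha : ∀ b, a * b = 0 → b ∈ p) (hap : a ∈ p) :
    ∃ q ∈ minimalPrimes R, q ≤ p ∧ a ∉ q := by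
  haveI := hR
  set S : Submonoid R :=
    { carrier := {x | ∃ s ∉ p, ∃ n : ℕ, x = s * a ^ n}
      one_mem' := ⟨1, hp.ne_top ∘ (Ideal.eq_top_of_isUnit_mem p · isUnit_one), 0, by ring⟩
      mul_mem' := by
        rintro x y ⟨s, hs, n, rfl⟩ ⟨t, ht, m, rfl⟩
        exact ⟨s * t, fun h => (hp.mem_or_mem h).elim hs ht, n + m, by ring⟩ } with hS
  have hdisj : Disjoint ((⊥ : Ideal R) : Set R) (S : Set R) := by
    rw [Set.disjoint_left]
    rintro x hx ⟨s, hs, n, rfl⟩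
    have hx0 : s * a ^ n = 0 := hx
    apply hs
    cases n with
    | zero =>
        have hs0 : s = 0 := by simpa using hx0
        exact ha s (by rw [hs0, mul_zero])
    | succ k =>
        have hnil : (s * a) ^ (k + 1) = 0 := by
          have : (s * a) ^ (k + 1) = s ^ k * (s * a ^ (k + 1)) := by ring
          rw [this, hx0, mul_zero]
        have : s * a = 0 := IsNilpotent.eq_zero ⟨k + 1, hnil⟩
        exact ha s (by rwa [mul_comm])
  obtain ⟨q₁, hq₁prime, -, hq₁disj⟩ := Ideal.exists_le_prime_disjoint ⊥ S hdisj
  have hq₁p : q₁ ≤ p := by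
    intro x hx
    by_contra hxp
    exact Set.disjoint_left.1 hq₁disj hx ⟨x, hxp, 0, by ring⟩
  have haq₁ : a ∉ q₁ := fun h =>
    Set.disjoint_left.1 hq₁disj h ⟨1, hp.ne_top ∘ (Ideal.eq_top_of_isUnit_mem p · isUnit_one),
      1, by ring⟩
  haveI := hq₁prime
  obtain ⟨q, hqmin, hqle⟩ := Ideal.exists_minimalPrimes_le (bot_le : (⊥ : Ideal R) ≤ q₁)
  exact ⟨q, hqmin, hqle.trans hq₁p, fun h => haq₁ (hqle h)⟩

/-- In a reduced ring, every element of a minimal prime is annihilated by an element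
outside that prime. -/
lemma factA (hR : IsReduced R) {q : Ideal R} (hq : q ∈ minimalPrimes R) {r : R} (hr : r ∈ q) :
    ∃ t ∉ q, t * r = 0 := by
  by_contra h
  push_neg at h
  have hqprime : q.IsPrime := hq.1.1
  obtain ⟨q', hq'min, hq'le, hrq'⟩ :=
    existsMinPrimeAvoid hR hqprime (fun b hb => by
      by_contra hbq
      exact (h b hbq) (by rwa [mul_comm])) hr
  have : q ≤ q' := hq.2 ⟨hq'min.1.1, bot_le⟩ hq'le
  exact hrq' (this hr)

/-- Key lemma: if `P` is a minimal prime submodule of a faithful reduced multiplication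
module and `a ∈ (P : M)`, then `a` is annihilated by some element outside `(P : M)`. -/
lemma starLemma (hfaithful : (⊥ : Submodule R M).colon ⊤ = ⊥)
    (hmul : IsMultiplicationModule R M) (hred : IsReducedModule R M)
    {P : Submodule R M} (hP : P.IsMinimalPrime) {a : R} (haP : a ∈ P.colon ⊤) :
    ∃ b ∉ P.colon ⊤, a * b = 0 := by
  have hR : IsReduced R := reducedR hfaithful hred
  have hp : (P.colon ⊤).IsPrime := colonPrime hP.1
  by_contra hcon
  push_neg at hcon
  obtain ⟨q, hqmin, hqp, haq⟩ := existsMinPrimeAvoid hR hp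
    (fun b hb => by by_contra hbp; exact hcon b hbp hb) haP
  have hqprime : q.IsPrime := hqmin.1.1
  -- the q-torsion submodule
  set N : Submodule R M :=
    { carrier := {m | ∃ s ∉ q, s • m = 0}
      zero_mem' := ⟨1, fun h => hqprime.ne_top (Ideal.eq_top_of_isUnit_mem q h isUnit_one),
        smul_zero 1⟩
      add_mem' := by
        rintro x y ⟨s, hs, hsx⟩ ⟨t, ht, hty⟩
        refine ⟨s * t, fun h => (hqprime.mem_or_mem h).elim hs ht, ?_⟩
        have h1 : (s * t) • x = 0 := by rw [mul_comm, mul_smul, hsx, smul_zero]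
        rw [smul_add, h1, zero_add, mul_smul, hty, smul_zero]
      smul_mem' := by
        rintro c x ⟨s, hs, hsx⟩
        exact ⟨s, hs, by rw [smul_comm, hsx, smul_zero]⟩ } with hN
  -- N ≤ P (via multiplication + faithfulness)
  have hNP : N ≤ P := by
    rintro m ⟨s, hs, hsm⟩
    obtain ⟨I, hI⟩ := hmul (Submodule.span R {m})
    have hIq : I ≤ q := by
      intro c hc
      have hsc : s * c = 0 := by
        have hsc' : s * c ∈ (⊥ : Submodule R M).colon ⊤ := by
          rw [Submodule.mem_colon]
          intro x _
          have hcx : c • x ∈ Submodule.span R {m} := by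
            rw [hI]; exact Submodule.smul_mem_smul hc trivial
          obtain ⟨r, hr⟩ := Submodule.mem_span_singleton.1 hcx
          have : (s * c) • x = r • (s • m) := by
            rw [mul_smul, ← hr, smul_comm]
          rw [Submodule.mem_bot, this, hsm, smul_zero]
        rwa [hfaithful, Submodule.mem_bot] at hsc'
      rcases hqprime.mem_or_mem (show c * s ∈ q by rw [mul_comm, hsc]; exact zero_mem q) with
        h | h
      · exact h
      · exact absurd h hs
    have : m ∈ Submodule.span R {m} := Submodule.mem_span_singleton_self m
    rw [hI] at this
    have hle : I • (⊤ : Submodule R M) ≤ P := by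
      refine le_trans (Submodule.smul_mono_left (hIq.trans hqp)) ?_
      rw [Submodule.smul_le]
      intro r hr n _
      exact Submodule.mem_colon.1 hr n trivial
    exact hle this
  -- N is a prime submodule
  have hNprime : N.IsPrimeSubmodule := by
    constructor
    · intro htop
      exact hP.1.1 (eq_top_iff.2 (fun m _ => hNP (htop ▸ Submodule.mem_top)))
    · rintro r m ⟨s, hs, hsrm⟩
      by_cases hr : r ∈ q
      · right
        obtain ⟨t, ht, htr⟩ := factA hR hqmin hr
        rw [Submodule.mem_colon]
        intro x _
        exact ⟨t, ht, by rw [smul_smul, htr, zero_smul]⟩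
      · left
        exact ⟨s * r, fun h => (hqprime.mem_or_mem h).elim hs hr,
          by rw [mul_smul]; exact hsrm⟩
  -- minimality forces N = P
  have hNeq : N = P := hP.2 N hNprime hNP
  -- but then P = ⊤, contradiction
  apply hP.1.1
  rw [eq_top_iff]
  intro m _
  have ham : a • m ∈ N := by
    rw [hNeq]
    exact Submodule.mem_colon.1 haP m trivial
  obtain ⟨s, hs, hsam⟩ := ham
  have : m ∈ N := ⟨s * a, fun h => (hqprime.mem_or_mem h).elim hs haq,
    by rw [mul_smul]; exact hsam⟩
  rw [hNeq] at this
  exact this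

theorem stmt3 (hfaithful : (⊥ : Submodule R M).colon ⊤ = ⊥)
    (hmul : IsMultiplicationModule R M) (hred : IsReducedModule R M) (a : R) :
    Vset (Ideal.span {a} • (⊤ : Submodule R M)) =
      Vset (pointAnn ((⊥ : Submodule R M).colon ((Ideal.span {a} • (⊤ : Submodule R M) : Submodule R M) : Set M))) := by
  set J : Ideal R := (⊥ : Submodule R M).colon ((Ideal.span {a} • (⊤ : Submodule R M) : Submodule R M) : Set M) with hJ
  ext P
  constructor
  · rintro ⟨hPmin, hle⟩
    refine ⟨hPmin, ?_⟩
    -- a ∈ (P : M)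
    have haP : a ∈ P.colon ⊤ := by
      rw [Submodule.mem_colon]
      intro m _
      exact hle (Submodule.smul_mem_smul (Ideal.mem_span_singleton_self a) trivial)
    obtain ⟨b, hb, hab⟩ := starLemma hfaithful hmul hred hPmin haP
    -- b ∈ J
    have hbJ : b ∈ J := by
      rw [hJ, Submodule.mem_colon]
      intro x hx
      rw [Submodule.mem_bot]
      have : Ideal.span {a} • (⊤ : Submodule R M) ≤
          LinearMap.ker (LinearMap.lsmul R M b) := by
        rw [Submodule.smul_le]
        intro r hr n _
        obtain ⟨c, rfl⟩ := Ideal.mem_span_singleton'.1 hr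
        rw [LinearMap.mem_ker, LinearMap.lsmul_apply, smul_smul,
          show b * (c * a) = (a * b) * c by ring, hab, zero_mul, zero_smul]
      simpa [LinearMap.mem_ker] using this hx
    -- pointAnn J ≤ P
    intro m' hm'
    have hbm' : b • m' = 0 := hm' b hbJ
    obtain ⟨I, hI⟩ := hmul (Submodule.span R {m'})
    have hIp : I ≤ P.colon ⊤ := by
      intro c hc
      have hbc : b * c = 0 := by
        have : b * c ∈ (⊥ : Submodule R M).colon ⊤ := by
          rw [Submodule.mem_colon]
          intro x _
          have hcx : c • x ∈ Submodule.span R {m'} := by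
            rw [hI]; exact Submodule.smul_mem_smul hc trivial
          obtain ⟨r, hr⟩ := Submodule.mem_span_singleton.1 hcx
          rw [Submodule.mem_bot, mul_smul, ← hr, smul_comm, hbm', smul_zero]
        rwa [hfaithful, Submodule.mem_bot] at this
      rcases (colonPrime hPmin.1).mem_or_mem
        (show c * b ∈ P.colon ⊤ by rw [mul_comm, hbc]; exact zero_mem _) with h | h
      · exact h
      · exact absurd h hb
    have : m' ∈ Submodule.span R {m'} := Submodule.mem_span_singleton_self m'
    rw [hI] at this
    have hle2 : I • (⊤ : Submodule R M) ≤ P := by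
      refine le_trans (Submodule.smul_mono_left hIp) ?_
      rw [Submodule.smul_le]
      intro r hr n _
      exact Submodule.mem_colon.1 hr n trivial
    exact hle2 this
  · rintro ⟨hPmin, hle⟩
    refine ⟨hPmin, le_trans ?_ hle⟩
    intro x hx
    intro j hj
    have := Submodule.mem_colon.1 hj x hx
    rwa [Submodule.mem_bot] at this
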